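/- A polynomial ξ of degree at most 2n+1 in one real variable is nonnegative on [0, ∞) if and only if there exist polynomials f and g, each a sum of two squares of polynomials of degree ≤ n, such that ξ(t) = f(t) + t·g(t) for all t. -/
import Mathlib

open Polynomial

/-- A real polynomial nonnegative on all of ℝ is a sum of two polynomial squares. -/
theorem sos_of_nonneg : ∀ (N : ℕ) (ξ : Polynomial ℝ), ξ.natDegree ≤ N →
    (∀ x : ℝ, 0 ≤ ξ.eval x) → ∃ A B : Polynomial ℝ, ξ = A ^ 2 + B ^ 2 := by
  intro N
  induction N with
  | zero =>
    intro ξ hd h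
    obtain ⟨c, rfl⟩ := Polynomial.natDegree_eq_zero.mp (Nat.le_zero.mp hd)
    have hc : 0 ≤ c := by simpa using h 0
    exact ⟨C (Real.sqrt c), 0, by
      rw [← map_pow, Real.sq_sqrt hc]; ring⟩
  | succ N ih =>
    intro ξ hd h
    rcases Nat.eq_zero_or_pos ξ.natDegree with h0 | hpos
    · obtain ⟨c, rfl⟩ := Polynomial.natDegree_eq_zero.mp h0
      have hc : 0 ≤ c := by simpa using h 0
      exact ⟨C (Real.sqrt c), 0, by rw [← map_pow, Real.sq_sqrt hc]; ring⟩
    · have hξ0 : ξ ≠ 0 := fun hh => by simp [hh] at hpos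
      set φ := algebraMap ℝ ℂ with hφ
      have hinj : Function.Injective φ := (algebraMap ℝ ℂ).injective
      have hdm : (ξ.map φ).natDegree = ξ.natDegree :=
        Polynomial.natDegree_map_eq_of_injective hinj ξ
      have hdm' : 0 < (ξ.map φ).degree := by
        rw [← Polynomial.natDegree_pos_iff_degree_pos, hdm]; exact hpos
      obtain ⟨z, hz⟩ := Complex.exists_root hdm'
      by_cases him : z.im = 0
      · -- real root r = z.re
        set r := z.re
        have hzr : z = (r : ℂ) := Complex.ext rfl (by simpa using him)
        have hroot : ξ.eval r = 0 := by
          have : (ξ.map φ).eval (φ r) = φ (ξ.eval r) := by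
            rw [Polynomial.eval_map, Polynomial.eval₂_at_apply]
          rw [hzr] at hz
          have h0 : φ (ξ.eval r) = 0 := by
            rw [← this]; exact hz
          exact hinj (by simpa using h0)
        -- derivative vanishes at r
        have hmin : IsLocalMin (fun x => ξ.eval x) r :=
          Filter.Eventually.of_forall (fun x => by
            simp only [hroot]; exact h x)
        have hder : ξ.derivative.eval r = 0 := by
          have := hmin.deriv_eq_zero
          rwa [Polynomial.deriv] at this
        -- factor (X - C r)^2
        obtain ⟨η, hη⟩ := (Polynomial.dvd_iff_isRoot.mpr hroot)
        have hηr : η.eval r = 0 := by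
          have : ξ.derivative = η + (X - C r) * η.derivative := by
            rw [hη, Polynomial.derivative_mul, Polynomial.derivative_X_sub_C]; ring
          have := congrArg (Polynomial.eval r) this
          rw [Polynomial.eval_add, Polynomial.eval_mul, hder] at this
          simpa using this.symm
        obtain ⟨ψ, hψ⟩ := (Polynomial.dvd_iff_isRoot.mpr hηr)
        have hfac : ξ = (X - C r) ^ 2 * ψ := by rw [hη, hψ]; ring
        have hψ0 : ψ ≠ 0 := fun hh => hξ0 (by rw [hfac, hh, mul_zero])
        have hψne : ∀ y : ℝ, y ≠ r → 0 ≤ ψ.eval y := by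
          intro y hyr
          have h1 := h y
          rw [hfac] at h1
          simp only [Polynomial.eval_mul, Polynomial.eval_pow,
            Polynomial.eval_sub, Polynomial.eval_X, Polynomial.eval_C] at h1
          have h2 : 0 < (y - r) ^ 2 := by
            have : y - r ≠ 0 := sub_ne_zero.mpr hyr
            positivity
          nlinarith
        have hψnn : ∀ x : ℝ, 0 ≤ ψ.eval x := by
          intro x
          by_cases hxr : x = r
          · subst hxr
            have hev : ∀ᶠ y in nhdsWithin r {r}ᶜ, 0 ≤ ψ.eval y := by
              refine Filter.eventually_of_mem self_mem_nhdsWithin ?_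
              intro y hy
              exact hψne y hy
            have htend : Filter.Tendsto (fun y => ψ.eval y) (nhdsWithin r {r}ᶜ)
                (nhds (ψ.eval r)) :=
              (ψ.continuous.tendsto r).mono_left nhdsWithin_le_nhds
            exact ge_of_tendsto htend hev
          · exact hψne x hxr
        have hdeg : ψ.natDegree ≤ N := by
          have hXr : ((X - C r : Polynomial ℝ) ^ 2) ≠ 0 := pow_ne_zero _ (X_sub_C_ne_zero r)
          have := Polynomial.natDegree_mul hXr hψ0
          rw [← hfac] at this
          have h2 : ((X - C r : Polynomial ℝ) ^ 2).natDegree = 2 := by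
            simp [Polynomial.natDegree_pow]
          omega
        obtain ⟨A, B, hAB⟩ := ih ψ hdeg hψnn
        exact ⟨(X - C r) * A, (X - C r) * B, by rw [hfac, hAB]; ring⟩
      · -- nonreal root
        set a := z.re
        set b := z.im
        set q : Polynomial ℝ := (X - C a) ^ 2 + C (b ^ 2) with hq
        have hqmap : q.map φ = (X - C z) * (X - C ((starRingEnd ℂ) z)) := by
          have hz' : z = (a : ℂ) + (b : ℂ) * Complex.I := (Complex.re_add_im z).symm
          have hzc : (starRingEnd ℂ) z = (a : ℂ) - (b : ℂ) * Complex.I := by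
            rw [hz']; simp [Complex.conj_ofReal]; ring_nf
          have hI : ((C Complex.I : Polynomial ℂ)) ^ 2 = -1 := by
            rw [← map_pow, Complex.I_sq, map_neg, map_one]
          rw [hzc, hz']
          simp only [hq, Polynomial.map_add, Polynomial.map_pow, Polynomial.map_sub,
            Polynomial.map_X, Polynomial.map_C]
          have hb2 : (φ (b ^ 2) : ℂ) = (b : ℂ) ^ 2 := by simp [hφ, Complex.ofReal_pow]
          rw [hb2, map_pow]
          have : (C ((a : ℂ) + (b : ℂ) * Complex.I)) = C (a : ℂ) + C (b : ℂ) * C Complex.I := by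
            rw [← map_mul, ← map_add]
          rw [this]
          have h2 : (C ((a : ℂ) - (b : ℂ) * Complex.I)) = C (a : ℂ) - C (b : ℂ) * C Complex.I := by
            rw [← map_mul, ← map_sub]
          rw [h2]
          have hCa : (C (φ a) : Polynomial ℂ) = C (a : ℂ) := rfl
          rw [hCa]
          linear_combination (C (b : ℂ)) ^ 2 * hI
        have hzc_root : (ξ.map φ).IsRoot ((starRingEnd ℂ) z) := by
          have : (starRingEnd ℂ) ((ξ.map φ).eval z) = (ξ.map φ).eval ((starRingEnd ℂ) z) := by
            rw [Polynomial.eval_map, Polynomial.hom_eval₂, Polynomial.eval_map]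
            congr 1
            ext x
            simp [hφ, Complex.conj_ofReal]
          rw [Polynomial.IsRoot, ← this, hz]
          simp
        have hne : z ≠ (starRingEnd ℂ) z := by
          intro hh
          have := Complex.conj_eq_iff_im.mp hh.symm
          exact him this
        -- divisibility
        obtain ⟨η₁, hη₁⟩ := Polynomial.dvd_iff_isRoot.mpr hz
        have hη₁root : η₁.IsRoot ((starRingEnd ℂ) z) := by
          have := hzc_root
          rw [hη₁] at this
          simp only [Polynomial.IsRoot, Polynomial.eval_mul, Polynomial.eval_sub,
            Polynomial.eval_X, Polynomial.eval_C] at this ⊢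
          have hsub : (starRingEnd ℂ) z - z ≠ 0 := sub_ne_zero.mpr (Ne.symm hne)
          exact (mul_eq_zero.mp this).resolve_left hsub
        obtain ⟨η₂, hη₂⟩ := Polynomial.dvd_iff_isRoot.mpr hη₁root
        have hdvd : q.map φ ∣ ξ.map φ := ⟨η₂, by rw [hqmap, hη₁, hη₂]; ring⟩
        have hqdvd : q ∣ ξ := (Polynomial.map_dvd_map' φ).mp hdvd
        obtain ⟨ψ, hfac⟩ := hqdvd
        have hqpos : ∀ x : ℝ, 0 < q.eval x := by
          intro x
          simp only [hq, Polynomial.eval_add, Polynomial.eval_pow, Polynomial.eval_sub,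
            Polynomial.eval_X, Polynomial.eval_C]
          have hb : b ≠ 0 := him
          positivity
        have hψnn : ∀ x : ℝ, 0 ≤ ψ.eval x := by
          intro x
          have h1 := h x
          rw [hfac, Polynomial.eval_mul] at h1
          exact (mul_nonneg_iff_of_pos_left (hqpos x)).mp h1
        have hψ0 : ψ ≠ 0 := fun hh => hξ0 (by rw [hfac, hh, mul_zero])
        have hq0 : q ≠ 0 := fun hh => by
          have := hqpos 0; rw [hh] at this; simp at this
        have hqdeg : q.natDegree = 2 := by
          have h1 : ((X - C a : Polynomial ℝ) ^ 2).natDegree = 2 := by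
            simp [Polynomial.natDegree_pow]
          rw [hq, Polynomial.natDegree_add_C, h1]
        have hdeg : ψ.natDegree ≤ N := by
          have := Polynomial.natDegree_mul hq0 hψ0
          rw [← hfac, hqdeg] at this
          omega
        obtain ⟨A, B, hAB⟩ := ih ψ hdeg hψnn
        refine ⟨(X - C a) * A - C b * B, (X - C a) * B + C b * A, ?_⟩
        rw [hfac, hAB, hq]
        have : (C (b ^ 2) : Polynomial ℝ) = (C b) ^ 2 := by rw [map_pow]
        rw [this]; ring

/-- coefficient of a square at twice an upper bound for the degree -/
theorem coeff_sq_two_mul (A : Polynomial ℝ) (m : ℕ) (hm : A.natDegree ≤ m) :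
    (A ^ 2).coeff (2 * m) = (A.coeff m) ^ 2 := by
  rcases lt_or_eq_of_le hm with hlt | heq
  · have h1 : (A ^ 2).natDegree < 2 * m := by
      have := Polynomial.natDegree_pow A 2
      omega
    rw [Polynomial.coeff_eq_zero_of_natDegree_lt h1,
      Polynomial.coeff_eq_zero_of_natDegree_lt hlt]
    ring
  · subst heq
    rw [sq A, sq]
    have := Polynomial.coeff_mul_degree_add_degree A A
    rw [← two_mul] at this
    rw [this, Polynomial.leadingCoeff]

theorem sos_natDegree_le {A B ξ : Polynomial ℝ} (hξ : ξ = A ^ 2 + B ^ 2) (h0 : ξ ≠ 0) :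
    2 * A.natDegree ≤ ξ.natDegree ∧ 2 * B.natDegree ≤ ξ.natDegree := by
  set m := max A.natDegree B.natDegree with hm
  have hA : A.natDegree ≤ m := le_max_left _ _
  have hB : B.natDegree ≤ m := le_max_right _ _
  have hco : ξ.coeff (2 * m) = (A.coeff m) ^ 2 + (B.coeff m) ^ 2 := by
    rw [hξ, Polynomial.coeff_add, coeff_sq_two_mul A m hA, coeff_sq_two_mul B m hB]
  have hne : ξ.coeff (2 * m) ≠ 0 := by
    rw [hco]
    by_cases hA0 : A = 0
    · have hB0 : B ≠ 0 := fun hh => h0 (by rw [hξ, hA0, hh]; ring)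
      have hmB : m = B.natDegree := by simp [hm, hA0]
      have : B.coeff m ≠ 0 := by
        rw [hmB]; exact Polynomial.leadingCoeff_ne_zero.mpr hB0
      positivity
    · by_cases hB0 : B = 0
      · have hmA : m = A.natDegree := by simp [hm, hB0]
        have : A.coeff m ≠ 0 := by
          rw [hmA]; exact Polynomial.leadingCoeff_ne_zero.mpr hA0
        positivity
      · rcases max_cases A.natDegree B.natDegree with ⟨hh, _⟩ | ⟨hh, _⟩
        · have : A.coeff m ≠ 0 := by
            rw [hm, hh]; exact Polynomial.leadingCoeff_ne_zero.mpr hA0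
          positivity
        · have : B.coeff m ≠ 0 := by
            rw [hm, hh]; exact Polynomial.leadingCoeff_ne_zero.mpr hB0
          positivity
  have hle : 2 * m ≤ ξ.natDegree := Polynomial.le_natDegree_of_ne_zero hne
  omega

noncomputable def evenPart (A : Polynomial ℝ) : Polynomial ℝ :=
  ∑ k ∈ Finset.range (A.natDegree + 1), Polynomial.monomial k (A.coeff (2 * k))

noncomputable def oddPart (A : Polynomial ℝ) : Polynomial ℝ :=
  ∑ k ∈ Finset.range (A.natDegree + 1), Polynomial.monomial k (A.coeff (2 * k + 1))

theorem evenPart_natDegree_le {A : Polynomial ℝ} {n : ℕ} (h : A.natDegree ≤ 2 * n + 1) :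
    (evenPart A).natDegree ≤ n := by
  apply Polynomial.natDegree_sum_le_of_forall_le
  intro k _
  by_cases hk : k ≤ n
  · exact le_trans (Polynomial.natDegree_monomial_le _) hk
  · have : A.coeff (2 * k) = 0 :=
      Polynomial.coeff_eq_zero_of_natDegree_lt (by omega)
    rw [this, Polynomial.monomial_zero_right]
    simp

theorem oddPart_natDegree_le {A : Polynomial ℝ} {n : ℕ} (h : A.natDegree ≤ 2 * n + 1) :
    (oddPart A).natDegree ≤ n := by
  apply Polynomial.natDegree_sum_le_of_forall_le
  intro k _
  by_cases hk : k ≤ n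
  · exact le_trans (Polynomial.natDegree_monomial_le _) hk
  · have : A.coeff (2 * k + 1) = 0 :=
      Polynomial.coeff_eq_zero_of_natDegree_lt (by omega)
    rw [this, Polynomial.monomial_zero_right]
    simp

theorem sum_range_two_mul (M : ℕ) (f : ℕ → ℝ) :
    ∑ i ∈ Finset.range (2 * M), f i = ∑ k ∈ Finset.range M, (f (2 * k) + f (2 * k + 1)) := by
  induction M with
  | zero => simp
  | succ M ih =>
    have h2 : 2 * (M + 1) = (2 * M + 1) + 1 := by ring
    rw [h2, Finset.sum_range_succ, Finset.sum_range_succ, ih, Finset.sum_range_succ]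
    ring

theorem evenodd_eval (A : Polynomial ℝ) (t : ℝ) :
    A.eval t = (evenPart A).eval (t ^ 2) + t * (oddPart A).eval (t ^ 2) := by
  have hlt : A.natDegree < 2 * (A.natDegree + 1) := by omega
  rw [Polynomial.eval_eq_sum_range' hlt t, sum_range_two_mul]
  unfold evenPart oddPart
  rw [Polynomial.eval_finset_sum, Polynomial.eval_finset_sum, Finset.mul_sum,
    ← Finset.sum_add_distrib]
  refine Finset.sum_congr rfl fun k _ => ?_
  rw [Polynomial.eval_monomial, Polynomial.eval_monomial]
  rw [show (t ^ 2) ^ k = t ^ (2 * k) by rw [← pow_mul, mul_comm]]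
  rw [pow_succ]
  ring

/-- A univariate real polynomial of degree ≤ 2n+1 is nonnegative
on [0,∞) iff ξ(t) = f(t) + t·g(t) with f, g sums of two squares of degree-≤n
polynomials. -/
theorem nonneg_halfline_odd (n : ℕ) (ξ : Polynomial ℝ)
    (hdeg : ξ.natDegree ≤ 2 * n + 1) :
    (∀ t : ℝ, 0 ≤ t → 0 ≤ ξ.eval t) ↔
      ∃ p q r s : Polynomial ℝ,
        p.natDegree ≤ n ∧ q.natDegree ≤ n ∧ r.natDegree ≤ n ∧ s.natDegree ≤ n ∧
        ∀ t : ℝ, ξ.eval t =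
          ((p.eval t) ^ 2 + (q.eval t) ^ 2) + t * ((r.eval t) ^ 2 + (s.eval t) ^ 2) := by
  constructor
  · intro h
    by_cases hξ0 : ξ = 0
    · exact ⟨0, 0, 0, 0, by simp, by simp, by simp, by simp,
        fun t => by simp [hξ0]⟩
    · set η := ξ.comp (X ^ 2) with hη
      have hηeval : ∀ t : ℝ, η.eval t = ξ.eval (t ^ 2) := fun t => by
        rw [hη, Polynomial.eval_comp, Polynomial.eval_pow, Polynomial.eval_X]
      have hηnn : ∀ t : ℝ, 0 ≤ η.eval t := fun t => by
        rw [hηeval]; exact h _ (sq_nonneg t)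
      have hη0 : η ≠ 0 := by
        intro hh
        rcases Polynomial.comp_eq_zero_iff.mp hh with h1 | ⟨_, h2⟩
        · exact hξ0 h1
        · have : (X ^ 2 : Polynomial ℝ).natDegree = 2 := by
            simp [Polynomial.natDegree_pow]
          rw [h2] at this
          simp at this
      have hηdeg : η.natDegree = 2 * ξ.natDegree := by
        rw [hη, Polynomial.natDegree_comp]
        simp [Polynomial.natDegree_pow]
        ring
      obtain ⟨A, B, hAB⟩ := sos_of_nonneg η.natDegree η le_rfl hηnn
      obtain ⟨hdA, hdB⟩ := sos_natDegree_le hAB hη0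
      have hA : A.natDegree ≤ 2 * n + 1 := by omega
      have hB : B.natDegree ≤ 2 * n + 1 := by omega
      refine ⟨evenPart A, evenPart B, oddPart A, oddPart B,
        evenPart_natDegree_le hA, evenPart_natDegree_le hB,
        oddPart_natDegree_le hA, oddPart_natDegree_le hB, ?_⟩
      set p := evenPart A
      set q := evenPart B
      set r := oddPart A
      set s := oddPart B
      have key : ∀ t : ℝ, 0 ≤ t →
          ξ.eval t = ((p.eval t) ^ 2 + (q.eval t) ^ 2)
            + t * ((r.eval t) ^ 2 + (s.eval t) ^ 2) := by
        intro t ht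
        set u := Real.sqrt t with hu
        have hu2 : u ^ 2 = t := Real.sq_sqrt ht
        have h1 : ξ.eval t = (A.eval u) ^ 2 + (B.eval u) ^ 2 := by
          rw [← hu2, ← hηeval, hAB]
          simp
        have h2 : ξ.eval t = (A.eval (-u)) ^ 2 + (B.eval (-u)) ^ 2 := by
          have hnu2 : (-u) ^ 2 = t := by rw [neg_sq]; exact hu2
          rw [← hnu2, ← hηeval, hAB]
          simp
        rw [evenodd_eval A u, evenodd_eval B u, hu2] at h1
        rw [evenodd_eval A (-u), evenodd_eval B (-u), neg_sq, hu2] at h2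
        nlinarith [h1, h2, hu2]
      -- extend to all reals via polynomial identity
      set P : Polynomial ℝ := (p ^ 2 + q ^ 2) + X * (r ^ 2 + s ^ 2) with hP
      have hPev : ∀ t : ℝ, P.eval t =
          ((p.eval t) ^ 2 + (q.eval t) ^ 2) + t * ((r.eval t) ^ 2 + (s.eval t) ^ 2) := by
        intro t; simp [hP]
      have hinf : Set.Infinite { x : ℝ | ξ.eval x = P.eval x } := by
        apply Set.Infinite.mono (s := Set.Ici (0:ℝ))
        · intro x hx
          simp only [Set.mem_setOf_eq]
          rw [hPev x]
          exact key x hx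
        · exact Set.Ici_infinite 0
      have hξP : ξ = P := Polynomial.eq_of_infinite_eval_eq ξ P hinf
      intro t
      rw [hξP, hPev t]
  · rintro ⟨p, q, r, s, _, _, _, _, hrep⟩ t ht
    rw [hrep t]
    positivity
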